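/- Let F be a string-net tensor satisfying the pentagon identity, unitarity, tetrahedral symmetry, normalization, and physicality, with all d_i > 0. Then the quantum dimensions satisfy the fusion relation d_i · d_j = Σ_k δ_{ijk*} d_k for all string types i, j. -/

import Mathlib

open scoped BigOperators

/-- For a string-net tensor `F` satisfying the pentagon identity, unitarity,
tetrahedral symmetry, normalization and physicality, with all `d_i > 0`, the quantum
dimensions satisfy the fusion relation `d_i · d_j = Σ_k δ_{ijk*} d_k`. -/
theorem stringnet_fusion_dimensions {N : ℕ}
    (st : Fin (N + 1) → Fin (N + 1))
    (hst : ∀ i, st (st i) = i) (hst0 : st 0 = 0)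
    (Δ : Fin (N + 1) → Fin (N + 1) → Fin (N + 1) → ℂ)
    (hΔ01 : ∀ i j k, Δ i j k = 0 ∨ Δ i j k = 1)
    (hΔcyc : ∀ i j k, Δ i j k = Δ j k i)
    (hΔbr : ∀ i j, Δ i (st j) 0 = if i = j then 1 else 0)
    (F : Fin (N + 1) → Fin (N + 1) → Fin (N + 1) → Fin (N + 1) → Fin (N + 1) →
      Fin (N + 1) → ℂ)
    (d : Fin (N + 1) → ℝ)
    (hd : ∀ i, 0 < d i)
    (hdF : ∀ i, F i (st i) 0 i (st i) 0 = ((d i)⁻¹ : ℝ))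
    (hphys : ∀ i j m k l n,
      F i j m k l n * Δ i j m * Δ k l (st m) = F i j m k l n * Δ i l n * Δ j k (st n))
    (hpent : ∀ m l q k p j i s r,
      ∑ n, F m l q k p n * F j i (st p) m n s * F j s n l k r =
        F j i (st p) (st q) k r * F (st r) i (st q) m l s)
    (hun : ∀ i j m k l n, (starRingEnd ℂ) (F i j m k l n) =
      F (st i) (st j) (st m) (st k) (st l) (st n))
    (htet : ∀ i j m k l n,
      F i j m k l n = F j i m l k (st n) ∧
      F i j m k l n = F l k (st m) j i n ∧
      F i j m k l n = F i m j (st k) n l *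
        (Real.sqrt (d m * d n / (d j * d l)) : ℝ))
    (hnorm : ∀ i j k, F i (st i) 0 (st j) j k =
      (Real.sqrt (d k / (d i * d j)) : ℝ) * Δ i j k) :
    ∀ i j, ((d i : ℂ) * (d j : ℂ)) = ∑ k, Δ i j (st k) * (d k : ℂ) := by

  -- Δ i (st i) 0 = 1
  have hΔ00 : ∀ i, Δ i (st i) 0 = 1 := fun i => by simp [hΔbr]
  -- d 0 = 1
  have hd0 : d 0 = 1 := by
    have h1 := hdF 0
    have h2 := hnorm 0 0 0
    rw [hst0] at h1 h2
    have hΔ : Δ 0 0 0 = 1 := by have := hΔ00 0; rwa [hst0] at this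
    rw [hΔ, mul_one, h1] at h2
    have hr : (d 0)⁻¹ = Real.sqrt (d 0 / (d 0 * d 0)) := by exact_mod_cast h2
    have hx : (0:ℝ) < d 0 := hd 0
    have he : d 0 / (d 0 * d 0) = (d 0)⁻¹ := by field_simp
    rw [he] at hr
    have h3 := Real.mul_self_sqrt (le_of_lt (inv_pos.mpr hx))
    rw [← hr] at h3
    field_simp at h3
    linarith
  -- d (st i) = d i
  have hdst : ∀ i, d (st i) = d i := by
    intro i
    have h1 := hdF i
    have h2 := hnorm i (st i) 0
    rw [hst i] at h2
    rw [hΔ00 i, mul_one, h1, hd0] at h2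
    have hr : (d i)⁻¹ = Real.sqrt (1 / (d i * d (st i))) := by exact_mod_cast h2
    have hi := hd i
    have hsti := hd (st i)
    have hsq : (d i)⁻¹ * (d i)⁻¹ = 1 / (d i * d (st i)) := by
      rw [hr]; exact Real.mul_self_sqrt (le_of_lt (by positivity))
    field_simp at hsq
    exact hsq
  -- F i 0 (st i) j k j = Δ i j k
  have hB : ∀ i j k, F i 0 (st i) j k j = Δ i j k := by
    intro i j k
    have ht := (htet i (st i) 0 (st j) j k).2.2
    rw [hst j, hdst i, hd0, one_mul] at ht
    rw [hnorm i j k] at ht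
    have hs : (0:ℝ) < Real.sqrt (d k / (d i * d j)) :=
      Real.sqrt_pos.mpr (div_pos (hd k) (mul_pos (hd i) (hd j)))
    have hne : ((Real.sqrt (d k / (d i * d j)) : ℝ) : ℂ) ≠ 0 :=
      Complex.ofReal_ne_zero.mpr (ne_of_gt hs)
    rw [mul_comm (F i 0 (st i) j k j)] at ht
    exact (mul_left_cancel₀ hne ht).symm
  -- F k j i 0 i j = Δ i j k
  have hD : ∀ i j k, F k j i 0 i j = Δ i j k := by
    intro i j k
    have ht := (htet i 0 (st i) j k j).2.1
    rw [hst i] at ht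
    rw [← ht]
    exact hB i j k
  -- F k i j 0 j i = Δ i j k
  have hD' : ∀ i j k, F k i j 0 j i = Δ i j k := by
    intro i j k
    have ht := (htet k j i 0 i j).2.2
    rw [hst0] at ht
    have harg : d i * d j / (d j * d i) = 1 := by
      rw [mul_comm (d j)]
      exact div_self (ne_of_gt (mul_pos (hd i) (hd j)))
    rw [harg] at ht
    norm_num at ht
    rw [← ht]
    exact hD i j k
  -- Δ symmetric
  have hΔsym : ∀ i j k, Δ j i k = Δ i j k := by
    intro i j k
    exact (hD j i k).symm.trans (hD' i j k)
  -- F j k i i 0 (st j) = Δ i j k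
  have hE : ∀ i j k, F j k i i 0 (st j) = Δ i j k := by
    intro i j k
    have ht := (htet k j i 0 i j).1
    exact ht.symm.trans (hD i j k)
  -- F j i k (st i) (st j) 0 = sqrt (d k / (d i * d j)) * Δ i j k
  have hG : ∀ i j k, F j i k (st i) (st j) 0
      = ((Real.sqrt (d k / (d i * d j)) : ℝ) : ℂ) * Δ i j k := by
    intro i j k
    have ht := (htet j k i i 0 (st j)).2.2
    rw [hE i j k, hdst j, hd0, mul_one] at ht
    have hs : (0:ℝ) < Real.sqrt (d i * d j / d k) :=
      Real.sqrt_pos.mpr (div_pos (mul_pos (hd i) (hd j)) (hd k))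
    have hss : Real.sqrt (d i * d j / d k) * Real.sqrt (d k / (d i * d j)) = 1 := by
      rw [← Real.sqrt_mul (le_of_lt (div_pos (mul_pos (hd i) (hd j)) (hd k)))]
      rw [show d i * d j / d k * (d k / (d i * d j)) = 1 by
        rw [div_mul_div_comm, mul_comm (d i * d j) (d k)]
        exact div_self (ne_of_gt (mul_pos (hd k) (mul_pos (hd i) (hd j))))]
      exact Real.sqrt_one
    have hne : ((Real.sqrt (d i * d j / d k) : ℝ) : ℂ) ≠ 0 :=
      Complex.ofReal_ne_zero.mpr (ne_of_gt hs)
    apply mul_right_cancel₀ hne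
    rw [← ht]
    rw [mul_comm (((Real.sqrt (d k / (d i * d j)) : ℝ) : ℂ)) (Δ i j k), mul_assoc]
    rw [show (((Real.sqrt (d k / (d i * d j)) : ℝ) : ℂ)) * ((Real.sqrt (d i * d j / d k) : ℝ) : ℂ) = 1 by
      rw [← Complex.ofReal_mul, mul_comm, hss, Complex.ofReal_one]]
    rw [mul_one]
  -- key fusion relation
  have hkey : ∀ a j, ((d a : ℂ) * (d j : ℂ)) = ∑ n, Δ a j n * (d n : ℂ) := by
    intro a j
    have hp := hpent a (st a) 0 (st j) j j 0 a 0
    rw [hst0] at hp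
    -- rewrite the sum terms
    have hterm : ∀ n : Fin (N + 1),
        F a (st a) 0 (st j) j n * F j 0 (st j) a n a * F j a n (st a) (st j) 0
        = (((d n / (d a * d j) : ℝ)) : ℂ) * Δ a j n := by
      intro n
      rw [hnorm a j n, hB j a n, hΔsym a j n, hG a j n]
      have hss : Real.sqrt (d n / (d a * d j)) * Real.sqrt (d n / (d a * d j))
          = d n / (d a * d j) :=
        Real.mul_self_sqrt (le_of_lt (div_pos (hd n) (mul_pos (hd a) (hd j))))
      rcases hΔ01 a j n with h | h <;> rw [h]
      · ring
      · rw [mul_one, mul_one, mul_one, ← Complex.ofReal_mul, hss]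
    rw [Finset.sum_congr rfl (fun n _ => hterm n)] at hp
    -- RHS factors equal 1
    have hr1 : F j 0 (st j) 0 (st j) 0 = 1 := by
      rw [hB j 0 (st j)]
      rw [hΔcyc j 0 (st j), hΔcyc 0 (st j) j]
      have := hΔbr (st j) (st j)
      rw [hst j] at this
      simp [this]
    have hr2 : F 0 0 0 a (st a) a = 1 := by
      have := hB 0 a (st a)
      rw [hst0] at this
      rw [this, hΔcyc 0 a (st a), hΔ00 a]
    rw [hr1, hr2, mul_one] at hp
    -- now hp : ∑ n, ↑(d n / (d a * d j)) * Δ a j n = 1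
    have hda : ((d a : ℂ) * (d j : ℂ)) ≠ 0 :=
      mul_ne_zero (Complex.ofReal_ne_zero.mpr (ne_of_gt (hd a)))
        (Complex.ofReal_ne_zero.mpr (ne_of_gt (hd j)))
    have := congrArg (fun z => z * ((d a : ℂ) * (d j : ℂ))) hp
    simp only [Finset.sum_mul, one_mul] at this
    rw [← this]
    apply Finset.sum_congr rfl
    intro n _
    push_cast
    have hane : ((d a : ℝ) : ℂ) ≠ 0 := Complex.ofReal_ne_zero.mpr (ne_of_gt (hd a))
    have hjne : ((d j : ℝ) : ℂ) ≠ 0 := Complex.ofReal_ne_zero.mpr (ne_of_gt (hd j))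
    field_simp
  intro i j
  rw [hkey i j]
  refine Fintype.sum_equiv ⟨st, st, hst, hst⟩ _ _ (fun n => ?_)
  simp only [Equiv.coe_fn_mk, hst n, hdst n]
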